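/- Let (x, y, h) be an sl2-triple of N×N complex matrices. Then the space of all N×N complex matrices decomposes as the direct sum of the kernel of ad y and the image of ad x; that is, Ker(ad y) ∩ Im(ad x) = {0} and Ker(ad y) + Im(ad x) is the whole space of N×N complex matrices. -/

import Mathlib

/-- The adjoint action `ad z : v ↦ z*v - v*z` on N×N complex matrices, as a linear map. -/
noncomputable def ad (N : ℕ) (z : Matrix (Fin N) (Fin N) ℂ) :
    Matrix (Fin N) (Fin N) ℂ →ₗ[ℂ] Matrix (Fin N) (Fin N) ℂ :=
  LinearMap.mulLeft ℂ z - LinearMap.mulRight ℂ z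

open LinearMap Polynomial Module

set_option linter.unusedSectionVars false

variable {V : Type*} [AddCommGroup V] [Module ℂ V] [FiniteDimensional ℂ V]

lemma E_pow_comm (E H : Module.End ℂ V) (hEH : ∀ w, E (H w) = H (E w) - (2:ℂ) • E w)
    (n : ℕ) (w : V) : E ((H ^ n) w) = ((H - (2:ℂ) • 1) ^ n) (E w) := by
  induction n generalizing w with
  | zero => simp
  | succ n ih =>
    rw [pow_succ, Module.End.mul_apply, ih (H w), pow_succ, Module.End.mul_apply]
    congr 1
    rw [hEH w]
    simp [sub_smul]

lemma E_aeval_comm (E H : Module.End ℂ V) (hEH : ∀ w, E (H w) = H (E w) - (2:ℂ) • E w)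
    (q : ℂ[X]) (w : V) : E ((aeval H q) w) = (aeval (H - (2:ℂ) • 1) q) (E w) := by
  induction q using Polynomial.induction_on' with
  | add p q hp hq => simp only [map_add, LinearMap.add_apply, hp, hq]
  | monomial n a =>
    simp only [aeval_monomial, Module.algebraMap_end_eq_smul_id, Module.End.mul_apply,
      LinearMap.smul_apply, map_smul, LinearMap.id_coe, id_eq]
    rw [E_pow_comm E H hEH]

lemma aeval_eigen (f : Module.End ℂ V) (ν : ℂ) (w : V) (hw : f w = ν • w) (q : ℂ[X]) :
    (aeval f q) w = q.eval ν • w := by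
  have hpow : ∀ n : ℕ, (f ^ n) w = ν ^ n • w := by
    intro n
    induction n with
    | zero => simp
    | succ n ih => rw [pow_succ, Module.End.mul_apply, hw, map_smul, ih, smul_smul, pow_succ,
        mul_comm]
  induction q using Polynomial.induction_on' with
  | add p q hp hq => simp only [map_add, LinearMap.add_apply, hp, hq, eval_add, add_smul]
  | monomial n a =>
    simp only [aeval_monomial, Module.algebraMap_end_eq_smul_id, Module.End.mul_apply, eval_monomial]
    simp only [LinearMap.smul_apply, LinearMap.id_coe, id_eq, hpow n, smul_smul]

/-- Key abstract lemma: no nonzero lowest-weight eigenvector of weight avoiding {2,3,4,...}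
can lie in the image of the raising operator. -/
lemma sl2_no_eigenvector_in_range
    (E F H : Module.End ℂ V)
    (hEF : ∀ w, E (F w) = F (E w) + H w)
    (hFH : ∀ w, F (H w) = H (F w) + (2:ℂ) • F w)
    (hEH : ∀ w, E (H w) = H (E w) - (2:ℂ) • E w)
    (c : ℂ) (hc : ∀ k : ℕ, c ≠ (k:ℂ) + 2)
    (v : V) (hv0 : v ≠ 0) (hvF : F v = 0) (hvH : H v = c • v)
    (hvE : v ∈ LinearMap.range E) : False := by
  classical
  set a : ℂ := c - 2 with ha_def
  have ha0 : a ≠ 0 := by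
    intro hza
    exact hc 0 (by rw [Nat.cast_zero, zero_add]; linear_combination hza)
  have hak : ∀ k : ℕ, 1 ≤ k → (-(k:ℂ)) ≠ a - 2*k := by
    intro k hk hbad
    exact hc k (by push_cast; linear_combination -hbad)
  -- Step 1: find u with E u = v and u generalized eigenvector at a
  have hfind : ∃ u : V, (∃ d : ℕ, ((H - a • 1) ^ d) u = 0) ∧ E u = v := by
    obtain ⟨u₀, hu₀⟩ := hvE
    set χ : ℂ[X] := LinearMap.charpoly H with hχ
    set m : ℕ := χ.rootMultiplicity a with hm
    set p : ℂ[X] := χ /ₘ (X - C a) ^ m with hp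
    have hχ0 : χ ≠ 0 := (LinearMap.charpoly_monic H).ne_zero
    have hps : p.eval a ≠ 0 := eval_divByMonic_pow_rootMultiplicity_ne_zero a hχ0
    refine ⟨(p.eval a)⁻¹ • ((aeval H) p) u₀, ⟨m, ?_⟩, ?_⟩
    · rw [map_smul]
      have he : (H - a • (1 : Module.End ℂ V)) ^ m = aeval H ((X - C a) ^ m) := by
        rw [map_pow, map_sub, aeval_X, aeval_C, Module.algebraMap_end_eq_smul_id,
          ← Module.End.one_eq_id]
      rw [he, ← Module.End.mul_apply, ← map_mul,
        Polynomial.pow_mul_divByMonic_rootMultiplicity_eq, LinearMap.aeval_self_charpoly,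
        LinearMap.zero_apply, smul_zero]
    · rw [map_smul, E_aeval_comm E H hEH, hu₀]
      have hv2 : (H - (2:ℂ) • (1 : Module.End ℂ V)) v = a • v := by
        simp only [LinearMap.sub_apply, LinearMap.smul_apply, Module.End.one_apply, hvH, ha_def]
        rw [sub_smul]
      rw [aeval_eigen _ a v hv2 p, smul_smul, inv_mul_cancel₀ hps, one_smul]
  obtain ⟨u, hQu, hEu⟩ := hfind
  have hFEu : F (E u) = 0 := by rw [hEu, hvF]
  -- Step 2: the string formula
  have strA : ∀ k : ℕ, E ((F ^ (k+1)) u)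
      = ((k:ℂ)+1) • H ((F ^ k) u) + ((k:ℂ)*((k:ℂ)+1)) • (F ^ k) u := by
    intro k
    induction k with
    | zero =>
      simp only [pow_one, pow_zero, Module.End.one_apply, Nat.cast_zero, zero_add, one_smul,
        zero_mul, zero_smul, add_zero]
      rw [hEF u, hFEu, zero_add]
    | succ k ih =>
      have hstep : (F ^ (k+2)) u = F ((F ^ (k+1)) u) := by
        rw [pow_succ', Module.End.mul_apply]
      have hf1 : F (H ((F ^ k) u)) = H ((F^(k+1)) u) + (2:ℂ) • (F^(k+1)) u := by
        rw [hFH ((F ^ k) u)]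
        have : F ((F ^ k) u) = (F^(k+1)) u := by rw [pow_succ', Module.End.mul_apply]
        rw [this]
      have hf2 : F ((F ^ k) u) = (F ^ (k+1)) u := by rw [pow_succ', Module.End.mul_apply]
      rw [hstep, hEF ((F ^ (k+1)) u), ih, map_add, map_smul, map_smul, hf1, hf2]
      push_cast
      module
  -- Step 3: propagation of generalized eigenvectors down the string
  have hQprop : ∀ (ν : ℂ) (w : V), (∃ d : ℕ, ((H - ν • 1) ^ d) w = 0) →
      (∃ d : ℕ, ((H - (ν - 2) • 1) ^ d) (F w) = 0) := by
    rintro ν w ⟨d, hd⟩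
    refine ⟨d, ?_⟩
    have hcomm : ∀ (z : V), ((H - (ν-2) • 1)) (F z) = F ((H - ν • 1) z) := by
      intro z
      simp only [LinearMap.sub_apply, LinearMap.smul_apply, Module.End.one_apply, map_sub,
        map_smul]
      rw [hFH z]
      module
    have hpowc : ∀ (e : ℕ) (z : V), ((H - (ν-2) • 1) ^ e) (F z) = F (((H - ν • 1) ^ e) z) := by
      intro e
      induction e with
      | zero => simp
      | succ e ihe =>
        intro z
        rw [pow_succ, Module.End.mul_apply, pow_succ, Module.End.mul_apply, ← ihe ((H - ν • 1) z),
          hcomm z]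
    rw [hpowc d w, hd, map_zero]
  have hQk : ∀ k : ℕ, ∃ d : ℕ, ((H - (a - 2*k) • 1) ^ d) ((F ^ k) u) = 0 := by
    intro k
    induction k with
    | zero => simpa using hQu
    | succ k ih =>
      have := hQprop (a - 2*k) ((F ^ k) u) ih
      have harg : (F ^ (k+1)) u = F ((F ^ k) u) := by rw [pow_succ', Module.End.mul_apply]
      rw [harg]
      convert this using 4
      push_cast
      ring
  -- Step 4: eigen-clash
  have clash : ∀ (ν ρ : ℂ) (w : V), (∃ d : ℕ, ((H - ν • 1) ^ d) w = 0) →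
      H w = ρ • w → ρ ≠ ν → w = 0 := by
    rintro ν ρ w ⟨d, hd⟩ hw hρν
    have hw' : (H - ν • 1) w = (ρ - ν) • w := by
      simp only [LinearMap.sub_apply, LinearMap.smul_apply, Module.End.one_apply, hw, sub_smul]
    have hsc : ∀ e : ℕ, ((H - ν • 1) ^ e) w = (ρ - ν)^e • w := by
      intro e
      induction e with
      | zero => simp
      | succ e ihe =>
        rw [pow_succ, Module.End.mul_apply, hw', map_smul, ihe, smul_smul, ← pow_succ']
    rw [hsc d] at hd
    have hne : (ρ - ν)^d ≠ 0 := pow_ne_zero d (sub_ne_zero.mpr hρν)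
    exact (smul_eq_zero.mp hd).resolve_left hne
  -- Step 5: extraction of honest eigenvectors
  have extract : ∀ (d : ℕ) (ν : ℂ) (w : V), w ≠ 0 → ((H - ν • 1) ^ d) w = 0 →
      ∃ w' : V, w' ≠ 0 ∧ H w' = ν • w' := by
    intro d
    induction d with
    | zero =>
      intro ν w hw0 hd
      simp only [pow_zero, Module.End.one_apply] at hd
      exact absurd hd hw0
    | succ d ihd =>
      intro ν w hw0 hd
      by_cases hz : (H - ν • 1) w = 0
      · refine ⟨w, hw0, ?_⟩
        have : H w - ν • w = 0 := by
          simpa only [LinearMap.sub_apply, LinearMap.smul_apply, Module.End.one_apply] using hz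
        rw [← sub_eq_zero]
        exact this
      · refine ihd ν ((H - ν • 1) w) hz ?_
        rw [← Module.End.mul_apply, ← pow_succ]
        exact hd
  -- Step 6: termination of the string
  have hterm : ∃ k : ℕ, 1 ≤ k ∧ (F ^ k) u = 0 := by
    by_contra hcon
    push_neg at hcon
    have hroots : ∀ k : ℕ, (minpoly ℂ H).IsRoot (a - 2*((k:ℂ)+1)) := by
      intro k
      have hne := hcon (k+1) (by omega)
      obtain ⟨d, hdq⟩ := hQk (k+1)
      have hcast : ((k+1 : ℕ) : ℂ) = (k:ℂ) + 1 := by push_cast; ring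
      rw [hcast] at hdq
      obtain ⟨w', hw'0, hw'⟩ := extract d _ _ hne hdq
      have hev : Module.End.HasEigenvalue H (a - 2*((k:ℂ)+1)) :=
        Module.End.hasEigenvalue_of_hasEigenvector
          ⟨(Module.End.mem_eigenspace_iff).2 hw', hw'0⟩
      exact Module.End.hasEigenvalue_iff_isRoot.mp hev
    have hfin : {z : ℂ | (minpoly ℂ H).IsRoot z}.Finite :=
      Polynomial.finite_setOf_isRoot (minpoly.ne_zero (LinearMap.isIntegral H))
    refine hfin.not_infinite (Set.infinite_of_injective_forall_mem
      (f := fun k : ℕ => a - 2*((k:ℂ)+1)) ?_ ?_)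
    · intro k₁ k₂ heq
      simp only at heq
      have : (k₁:ℂ) = (k₂:ℂ) := by linear_combination (-1/2 : ℂ) * heq
      exact_mod_cast this
    · intro k
      exact hroots k
  -- Step 7: one step down the string
  have hdstep : ∀ k : ℕ, 1 ≤ k → (F ^ (k+1)) u = 0 → (F ^ k) u = 0 := by
    intro k hk h0
    have h1 := strA k
    rw [h0, map_zero] at h1
    have hk1 : ((k:ℂ)+1) ≠ 0 := by
      have := Nat.cast_add_one_ne_zero (R := ℂ) k
      exact_mod_cast this
    have h2 : ((k:ℂ)+1) • H ((F ^ k) u) = -(((k:ℂ)*((k:ℂ)+1)) • (F ^ k) u) :=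
      add_eq_zero_iff_eq_neg.mp h1.symm
    have hHw : H ((F ^ k) u) = (-(k:ℂ)) • ((F ^ k) u) := by
      apply smul_right_injective V hk1
      simp only
      rw [h2]
      module
    exact clash (a - 2*(k:ℂ)) (-(k:ℂ)) ((F ^ k) u) (hQk k) hHw (hak k hk)
  -- Step 8: all the way down
  have hall : ∀ j k : ℕ, 1 ≤ k → (F ^ (k+j)) u = 0 → (F ^ k) u = 0 := by
    intro j
    induction j with
    | zero => intro k hk h0; simpa using h0
    | succ j ihj =>
      intro k hk h0
      apply hdstep k hk
      apply ihj (k+1) (by omega)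
      rw [show k + 1 + j = k + (j + 1) from by omega]
      exact h0
  obtain ⟨k, hk1, hk0⟩ := hterm
  have hFu : (F ^ 1) u = 0 := by
    apply hall (k-1) 1 le_rfl
    rw [show 1 + (k-1) = k from by omega]
    exact hk0
  -- Finale
  have hHu : H u = (0:ℂ) • u := by
    have h1 := strA 0
    rw [hFu, map_zero] at h1
    simp only [Nat.cast_zero, zero_add, one_smul, zero_mul, zero_smul, add_zero, pow_zero,
      Module.End.one_apply] at h1
    rw [zero_smul, ← h1]
  have hu0 : u = 0 := clash a 0 u hQu hHu (fun hz => ha0 hz.symm)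
  exact hv0 (by rw [← hEu, hu0, map_zero])

lemma ad_apply (N : ℕ) (z w : Matrix (Fin N) (Fin N) ℂ) : ad N z w = z * w - w * z := rfl

attribute [local instance] LieRing.ofAssociativeRing

lemma key (N : ℕ) (x y h : Matrix (Fin N) (Fin N) ℂ)
    (h1 : x * y - y * x = h)
    (h2 : h * x - x * h = (2 : ℂ) • x)
    (h3 : h * y - y * h = (-2 : ℂ) • y)
    (hh : h ≠ 0) :
    LinearMap.ker (ad N y) ⊓ LinearMap.range (ad N x) = ⊥ := by
  set E : Module.End ℂ (Matrix (Fin N) (Fin N) ℂ) := ad N x with hE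
  set F : Module.End ℂ (Matrix (Fin N) (Fin N) ℂ) := ad N y with hF
  set H : Module.End ℂ (Matrix (Fin N) (Fin N) ℂ) := ad N h with hH
  have adad : ∀ (a b w : Matrix (Fin N) (Fin N) ℂ),
      ad N a (ad N b w) - ad N b (ad N a w) = ad N (a*b - b*a) w := by
    intro a b w
    simp only [ad_apply]
    noncomm_ring
  have ad_smul : ∀ (s : ℂ) (z w : Matrix (Fin N) (Fin N) ℂ), ad N (s • z) w = s • ad N z w := by
    intro s z w
    simp only [ad_apply, smul_mul_assoc, mul_smul_comm, smul_sub]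
  have hEF : ∀ w, E (F w) = F (E w) + H w := by
    intro w
    have := adad x y w
    rw [h1] at this
    rw [← this]
    abel
  have hFH : ∀ w, F (H w) = H (F w) + (2:ℂ) • F w := by
    intro w
    have h5 := adad h y w
    rw [h3, ad_smul] at h5
    have h4 : F (H w) = H (F w) - (-2:ℂ) • F w := by rw [← h5]; abel
    rw [h4]; module
  have hEH : ∀ w, E (H w) = H (E w) - (2:ℂ) • E w := by
    intro w
    have h5 := adad h x w
    rw [h2, ad_smul] at h5
    have h4 : E (H w) = H (E w) - (2:ℂ) • E w := by rw [← h5]; abel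
    exact h4
  -- the intersection is H-invariant
  by_contra hW
  set W : Submodule ℂ (Matrix (Fin N) (Fin N) ℂ) := LinearMap.ker F ⊓ LinearMap.range E with hWdef
  have hWinv : ∀ w ∈ W, H w ∈ W := by
    rintro w ⟨hwk, hwr⟩
    constructor
    · have hwk' : F w = 0 := hwk
      have : F (H w) = 0 := by rw [hFH w, hwk', map_zero, smul_zero, add_zero]
      exact this
    · obtain ⟨z, hz⟩ := hwr
      refine ⟨H z + (2:ℂ) • z, ?_⟩
      rw [map_add, map_smul]
      have := hEH z
      rw [hz] at this ⊢
      rw [this]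
      module
  haveI : Nontrivial W := Submodule.nontrivial_iff_ne_bot.mpr hW
  obtain ⟨c, hc⟩ := Module.End.exists_eigenvalue (H.restrict hWinv)
  obtain ⟨⟨v, hvW⟩, hvec⟩ := hc.exists_hasEigenvector
  have hv0 : v ≠ 0 := by
    intro hz
    exact hvec.right (by simp [Subtype.ext_iff, hz])
  have hvH : H v = c • v := by
    have := hvec.apply_eq_smul
    have h6 := congrArg (Subtype.val) this
    simpa [LinearMap.restrict_apply] using h6
  have hvF : F v = 0 := hvW.1
  have hvE : v ∈ LinearMap.range E := hvW.2
  -- the eigenvalue is a nonpositive integer, via mathlib's sl2 theory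
  have hnat : ∃ n : ℕ, c = -(n : ℂ) := by
    have t : IsSl2Triple h x y := by
      refine ⟨hh, ?_, ?_, ?_⟩ <;> rw [Ring.lie_def]
      · exact h1
      · rw [h2]; norm_num [two_smul]
      · rw [h3]; module
    have P : IsSl2Triple.HasPrimitiveVectorWith t.symm v (-c) := by
      refine ⟨hv0, ?_, ?_⟩
      · rw [LieRing.of_associative_ring_bracket]
        simp only [neg_mul, mul_neg]
        rw [show -(h*v) - -(v*h) = -(h*v - v*h) by abel]
        have : h * v - v * h = c • v := hvH
        rw [this, neg_smul]
      · rw [LieRing.of_associative_ring_bracket]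
        have : y * v - v * y = 0 := hvF
        rw [this]
    obtain ⟨n, hn⟩ := P.exists_nat
    exact ⟨n, by linear_combination -hn⟩
  obtain ⟨n, hn⟩ := hnat
  have hcnot : ∀ k : ℕ, c ≠ (k:ℂ) + 2 := by
    intro k hk
    rw [hn] at hk
    have hzz : ((n + k + 2 : ℕ) : ℂ) = 0 := by push_cast; linear_combination -hk
    rw [Nat.cast_eq_zero] at hzz
    omega
  exact sl2_no_eigenvector_in_range E F H hEF hFH hEH c hcnot v hv0 hvF hvH hvE


/-- for an sl2-triple (x,y,h) of N×N complex matrices, the space of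
N×N matrices is the direct sum of `Ker (ad y)` and `Im (ad x)`. -/
theorem stmt1 (N : ℕ) (x y h : Matrix (Fin N) (Fin N) ℂ)
    (h1 : x * y - y * x = h)
    (h2 : h * x - x * h = (2 : ℂ) • x)
    (h3 : h * y - y * h = (-2 : ℂ) • y) :
    LinearMap.ker (ad N y) ⊓ LinearMap.range (ad N x) = ⊥ ∧
      LinearMap.ker (ad N y) ⊔ LinearMap.range (ad N x) = ⊤ := by
  by_cases hh : h = 0
  · have hx : x = 0 := by
      have : (2:ℂ) • x = 0 := by rw [← h2, hh, zero_mul, mul_zero, sub_zero]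
      simpa using this
    have hy : y = 0 := by
      have : (-2:ℂ) • y = 0 := by rw [← h3, hh, zero_mul, mul_zero, sub_zero]
      simpa using this
    have hzero : ad N (0 : Matrix (Fin N) (Fin N) ℂ) = 0 := by
      apply LinearMap.ext
      intro w
      simp [ad_apply]
    rw [hx, hy, hzero]
    simp
  · have k1 : LinearMap.ker (ad N y) ⊓ LinearMap.range (ad N x) = ⊥ :=
      key N x y h h1 h2 h3 hh
    have h1' : y * x - x * y = -h := by rw [← h1]; noncomm_ring
    have h2' : (-h) * y - y * (-h) = (2:ℂ) • y := by
      rw [show (-h) * y - y * (-h) = -(h*y - y*h) from by noncomm_ring, h3]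
      module
    have h3' : (-h) * x - x * (-h) = (-2:ℂ) • x := by
      rw [show (-h) * x - x * (-h) = -(h*x - x*h) from by noncomm_ring, h2]
      module
    have k2 : LinearMap.ker (ad N x) ⊓ LinearMap.range (ad N y) = ⊥ :=
      key N y x (-h) h1' h2' h3' (neg_ne_zero.mpr hh)
    refine ⟨k1, ?_⟩
    have s1 := Submodule.finrank_sup_add_finrank_inf_eq
      (LinearMap.ker (ad N y)) (LinearMap.range (ad N x))
    have s2 := Submodule.finrank_sup_add_finrank_inf_eq
      (LinearMap.ker (ad N x)) (LinearMap.range (ad N y))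
    rw [k1] at s1
    rw [k2] at s2
    rw [finrank_bot] at s1 s2
    have r1 := LinearMap.finrank_range_add_finrank_ker (ad N x)
    have r2 := LinearMap.finrank_range_add_finrank_ker (ad N y)
    have t1 := Submodule.finrank_le (LinearMap.ker (ad N y) ⊔ LinearMap.range (ad N x))
    have t2 := Submodule.finrank_le (LinearMap.ker (ad N x) ⊔ LinearMap.range (ad N y))
    apply Submodule.eq_top_of_finrank_eq
    omega
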